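/- Let S_A ⊆ V_A and S_B ⊆ V_B be compact convex subsets of finite-dimensional real vector spaces, with linear unit functionals 𝟙_A, 𝟙_B equal to 1 on S_A, S_B respectively. Let S_{AB} ⊆ V_A ⊗ V_B be a convex set such that every ω ∈ S_{AB} satisfies (𝟙_A ⊗ 𝟙_B)(ω) = 1, and such that for every ω ∈ S_{AB}: for every effect E_B on B with (𝟙_A ⊗ E_B)(ω) > 0 the conditional state (id_{V_A} ⊗ E_B)(ω)/(𝟙_A ⊗ E_B)(ω) lies in S_A, and symmetrically every conditional state on B arising from an effect on A lies in S_B. If ω_A is an extreme point of S_A, ω_B is an extreme point of S_B, and ω_A ⊗ ω_B ∈ S_{AB}, then ω_A ⊗ ω_B is an extreme point of S_{AB}. -/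

import Mathlib

open TensorProduct

set_option synthInstance.maxHeartbeats 1000000 in
theorem aux_pair1 {VA VB : Type*} [AddCommGroup VA] [Module ℝ VA] [AddCommGroup VB] [Module ℝ VB]
    (f : VA →ₗ[ℝ] ℝ) (g : VB →ₗ[ℝ] ℝ) (x : VA ⊗[ℝ] VB) :
    TensorProduct.lid ℝ ℝ (TensorProduct.map f g x)
      = g (TensorProduct.lid ℝ VB (TensorProduct.map f (LinearMap.id : VB →ₗ[ℝ] VB) x)) := by
  induction x using TensorProduct.induction_on with
  | zero => simp only [map_zero]
  | tmul a v => simp [mul_comm]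
  | add y z hy hz => simp only [map_add, hy, hz]

set_option synthInstance.maxHeartbeats 1000000 in
theorem aux_pair2 {VA VB : Type*} [AddCommGroup VA] [Module ℝ VA] [AddCommGroup VB] [Module ℝ VB]
    (f : VA →ₗ[ℝ] ℝ) (g : VB →ₗ[ℝ] ℝ) (x : VA ⊗[ℝ] VB) :
    TensorProduct.lid ℝ ℝ (TensorProduct.map f g x)
      = f (TensorProduct.rid ℝ VA (TensorProduct.map (LinearMap.id : VA →ₗ[ℝ] VA) g x)) := by
  induction x using TensorProduct.induction_on with
  | zero => simp only [map_zero]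
  | tmul a v => simp [mul_comm]
  | add y z hy hz => simp only [map_add, hy, hz]

theorem aux_expand {VA VB : Type*} [AddCommGroup VA] [Module ℝ VA] [AddCommGroup VB] [Module ℝ VB]
    {ι : Type*} [Fintype ι] (b : Module.Basis ι ℝ VB) (x : VA ⊗[ℝ] VB) :
    x = ∑ i, (TensorProduct.rid ℝ VA
        (TensorProduct.map (LinearMap.id : VA →ₗ[ℝ] VA) (b.coord i) x)) ⊗ₜ[ℝ] b i := by
  induction x using TensorProduct.induction_on with
  | zero => simp only [map_zero, zero_tmul, Finset.sum_const_zero]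
  | tmul a v =>
      calc a ⊗ₜ[ℝ] v = a ⊗ₜ[ℝ] (∑ i, b.repr v i • b i) := by rw [Module.Basis.sum_repr]
      _ = ∑ i, (b.repr v i • a) ⊗ₜ[ℝ] b i := by
          rw [tmul_sum]
          exact Finset.sum_congr rfl fun i _ => (smul_tmul _ _ _).symm
      _ = _ := by
          refine Finset.sum_congr rfl fun i _ => ?_
          simp [rid_tmul]
  | add y z hy hz =>
      simp only [map_add, add_tmul, Finset.sum_add_distrib]
      rw [← hy, ← hz]

theorem aux_span {VB : Type*} [NormedAddCommGroup VB] [NormedSpace ℝ VB] [FiniteDimensional ℝ VB]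
    (SB : Set VB) (hSBc : IsCompact SB) (uB : VB →ₗ[ℝ] ℝ) (huB : ∀ x ∈ SB, uB x = 1) :
    Submodule.span ℝ {f : VB →ₗ[ℝ] ℝ | ∀ x ∈ SB, 0 ≤ f x ∧ f x ≤ 1} = ⊤ := by
  rw [eq_top_iff]
  rintro f -
  obtain ⟨R, hR⟩ := hSBc.isBounded.exists_norm_le
  set F := LinearMap.toContinuousLinearMap f with hFdef
  set M : ℝ := ‖F‖ * max R 0 + 1 with hM
  have hM0 : 0 < M := by positivity
  have hfM : ∀ x ∈ SB, |f x| ≤ M := by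
    intro x hx
    have h1 : |f x| = ‖F x‖ := rfl
    have h2 : ‖F x‖ ≤ ‖F‖ * ‖x‖ := F.le_opNorm x
    have h3 : ‖x‖ ≤ max R 0 := le_trans (hR x hx) (le_max_left _ _)
    have h4 : ‖F‖ * ‖x‖ ≤ ‖F‖ * max R 0 := by
      exact mul_le_mul_of_nonneg_left h3 (norm_nonneg F)
    rw [h1]; linarith
  set g : VB →ₗ[ℝ] ℝ := (2 * M)⁻¹ • (f + M • uB) with hg
  have hgmem : g ∈ {f : VB →ₗ[ℝ] ℝ | ∀ x ∈ SB, 0 ≤ f x ∧ f x ≤ 1} := by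
    intro x hx
    have h1 := hfM x hx
    have h2 := huB x hx
    have habs := abs_le.mp h1
    constructor
    · simp only [hg, LinearMap.smul_apply, LinearMap.add_apply, smul_eq_mul, h2, mul_one]
      have : (0:ℝ) ≤ f x + M := by linarith [habs.1]
      positivity
    · simp only [hg, LinearMap.smul_apply, LinearMap.add_apply, smul_eq_mul, h2, mul_one]
      rw [inv_mul_le_iff₀ (by positivity)]
      linarith [habs.2]
  have huBmem : uB ∈ {f : VB →ₗ[ℝ] ℝ | ∀ x ∈ SB, 0 ≤ f x ∧ f x ≤ 1} := by
    intro x hx; rw [huB x hx]; norm_num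
  have hfeq : f = (2 * M) • g - M • uB := by
    rw [hg, smul_smul, mul_inv_cancel₀ (by positivity : (2*M:ℝ) ≠ 0), one_smul]
    abel
  rw [hfeq]
  exact Submodule.sub_mem _
    (Submodule.smul_mem _ _ (Submodule.subset_span hgmem))
    (Submodule.smul_mem _ _ (Submodule.subset_span huBmem))

set_option synthInstance.maxHeartbeats 1000000 in
/-- In a composite whose conditional states are always valid local states,
products of pure states are pure: if `ω_A` and `ω_B` are extreme points of the
local state spaces and `ω_A ⊗ ω_B` is a member of the composite state space,
then it is an extreme point of the composite state space. -/
theorem stmt_13 {VA VB : Type*}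
    [NormedAddCommGroup VA] [NormedSpace ℝ VA] [FiniteDimensional ℝ VA]
    [NormedAddCommGroup VB] [NormedSpace ℝ VB] [FiniteDimensional ℝ VB]
    (SA : Set VA) (hSAc : IsCompact SA) (hSAconv : Convex ℝ SA)
    (SB : Set VB) (hSBc : IsCompact SB) (hSBconv : Convex ℝ SB)
    (uA : VA →ₗ[ℝ] ℝ) (huA : ∀ x ∈ SA, uA x = 1)
    (uB : VB →ₗ[ℝ] ℝ) (huB : ∀ x ∈ SB, uB x = 1)
    (SAB : Set (VA ⊗[ℝ] VB)) (hSABconv : Convex ℝ SAB)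
    (hunit : ∀ ω ∈ SAB, TensorProduct.lid ℝ ℝ (TensorProduct.map uA uB ω) = 1)
    (hcondA : ∀ ω ∈ SAB, ∀ EB : VB →ₗ[ℝ] ℝ, (∀ x ∈ SB, 0 ≤ EB x ∧ EB x ≤ 1) →
      ∀ lam : ℝ, lam = TensorProduct.lid ℝ ℝ (TensorProduct.map uA EB ω) → 0 < lam →
      lam⁻¹ • (TensorProduct.rid ℝ VA)
        (TensorProduct.map (LinearMap.id : VA →ₗ[ℝ] VA) EB ω) ∈ SA)
    (hcondB : ∀ ω ∈ SAB, ∀ EA : VA →ₗ[ℝ] ℝ, (∀ x ∈ SA, 0 ≤ EA x ∧ EA x ≤ 1) →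
      ∀ lam : ℝ, lam = TensorProduct.lid ℝ ℝ (TensorProduct.map EA uB ω) → 0 < lam →
      lam⁻¹ • (TensorProduct.lid ℝ VB)
        (TensorProduct.map EA (LinearMap.id : VB →ₗ[ℝ] VB) ω) ∈ SB)
    (ωA : VA) (hωA : ωA ∈ SA.extremePoints ℝ)
    (ωB : VB) (hωB : ωB ∈ SB.extremePoints ℝ)
    (hprod : ωA ⊗ₜ[ℝ] ωB ∈ SAB) :
    ωA ⊗ₜ[ℝ] ωB ∈ SAB.extremePoints ℝ := by
  classical
  obtain ⟨hωAS, hωAext⟩ := hωA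
  obtain ⟨hωBS, hωBext⟩ := hωB
  have huAωA : uA ωA = 1 := huA ωA hωAS
  have huBωB : uB ωB = 1 := huB ωB hωBS
  have effuB : ∀ x ∈ SB, 0 ≤ uB x ∧ uB x ≤ 1 := fun x hx => by rw [huB x hx]; norm_num
  have effuA : ∀ x ∈ SA, 0 ≤ uA x ∧ uA x ≤ 1 := fun x hx => by rw [huA x hx]; norm_num
  -- marginals of members of SAB are local states
  have hmAmem : ∀ x ∈ SAB, TensorProduct.rid ℝ VA
      (TensorProduct.map (LinearMap.id : VA →ₗ[ℝ] VA) uB x) ∈ SA := by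
    intro x hx
    have h := hcondA x hx uB effuB 1 (hunit x hx).symm one_pos
    rwa [inv_one, one_smul] at h
  have hmBmem : ∀ x ∈ SAB, TensorProduct.lid ℝ VB
      (TensorProduct.map uA (LinearMap.id : VB →ₗ[ℝ] VB) x) ∈ SB := by
    intro x hx
    have h := hcondB x hx uA effuA 1 (hunit x hx).symm one_pos
    rwa [inv_one, one_smul] at h
  -- key: a member of SAB with marginals ωA and ωB is ωA ⊗ ωB
  have key : ∀ x ∈ SAB,
      TensorProduct.rid ℝ VA (TensorProduct.map (LinearMap.id : VA →ₗ[ℝ] VA) uB x) = ωA →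
      TensorProduct.lid ℝ VB (TensorProduct.map uA (LinearMap.id : VB →ₗ[ℝ] VB) x) = ωB →
      x = ωA ⊗ₜ[ℝ] ωB := by
    intro x hx hxA hxB
    -- step 1: conditional identity for effects
    have hv : ∀ f : VB →ₗ[ℝ] ℝ, (∀ y ∈ SB, 0 ≤ f y ∧ f y ≤ 1) →
        TensorProduct.rid ℝ VA (TensorProduct.map (LinearMap.id : VA →ₗ[ℝ] VA) f x)
          = f ωB • ωA := by
      intro f hf
      set v := TensorProduct.rid ℝ VA (TensorProduct.map (LinearMap.id : VA →ₗ[ℝ] VA) f x)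
        with hvdef
      set q := f ωB with hqdef
      obtain ⟨hq0, hq1⟩ := hf ωB hωBS
      rw [← hqdef] at hq0 hq1
      have hq1' : (0:ℝ) < q + 1 := by linarith
      have hq2' : (0:ℝ) < 2 - q := by linarith
      have hp : TensorProduct.lid ℝ ℝ (TensorProduct.map uA f x) = q := by
        rw [aux_pair1 uA f x, hxB]
      -- effect F = (f + uB)/2
      set F : VB →ₗ[ℝ] ℝ := (2:ℝ)⁻¹ • (f + uB) with hF
      have effF : ∀ y ∈ SB, 0 ≤ F y ∧ F y ≤ 1 := by
        intro y hy
        obtain ⟨h0, h1⟩ := hf y hy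
        have h2 := huB y hy
        constructor <;>
          simp only [hF, LinearMap.smul_apply, LinearMap.add_apply, smul_eq_mul, h2] <;>
          linarith
      have hlamF : TensorProduct.lid ℝ ℝ (TensorProduct.map uA F x) = (q+1)/2 := by
        rw [hF, TensorProduct.map_smul_right, TensorProduct.map_add_right]
        simp only [LinearMap.smul_apply, LinearMap.add_apply, map_smul, map_add, smul_eq_mul]
        rw [hp, hunit x hx]; ring
      have hmidF : TensorProduct.rid ℝ VA (TensorProduct.map (LinearMap.id : VA →ₗ[ℝ] VA) F x)
          = (2:ℝ)⁻¹ • (v + ωA) := by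
        rw [hF, TensorProduct.map_smul_right, TensorProduct.map_add_right]
        simp only [LinearMap.smul_apply, LinearMap.add_apply, map_smul, map_add]
        rw [hxA]
      have hσ := hcondA x hx F effF ((q+1)/2) hlamF.symm (by positivity)
      rw [hmidF] at hσ
      -- effect G = uB - f/2
      set G : VB →ₗ[ℝ] ℝ := uB + (-(2:ℝ)⁻¹) • f with hG
      have effG : ∀ y ∈ SB, 0 ≤ G y ∧ G y ≤ 1 := by
        intro y hy
        obtain ⟨h0, h1⟩ := hf y hy
        have h2 := huB y hy
        constructor <;>
          simp only [hG, LinearMap.smul_apply, LinearMap.add_apply, smul_eq_mul, h2] <;>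
          linarith
      have hlamG : TensorProduct.lid ℝ ℝ (TensorProduct.map uA G x) = (2-q)/2 := by
        rw [hG, TensorProduct.map_add_right, TensorProduct.map_smul_right]
        simp only [LinearMap.smul_apply, LinearMap.add_apply, map_smul, map_add, smul_eq_mul]
        rw [hp, hunit x hx]; ring
      have hmidG : TensorProduct.rid ℝ VA (TensorProduct.map (LinearMap.id : VA →ₗ[ℝ] VA) G x)
          = ωA + (-(2:ℝ)⁻¹) • v := by
        rw [hG, TensorProduct.map_add_right, TensorProduct.map_smul_right]
        simp only [LinearMap.smul_apply, LinearMap.add_apply, map_smul, map_add]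
        rw [hxA]
      have hτ := hcondA x hx G effG ((2-q)/2) hlamG.symm (by positivity)
      rw [hmidG] at hτ
      -- ωA is in the open segment between the two conditional states
      have hseg : ωA ∈ openSegment ℝ
          (((q+1)/2)⁻¹ • ((2:ℝ)⁻¹ • (v + ωA)))
          (((2-q)/2)⁻¹ • (ωA + (-(2:ℝ)⁻¹) • v)) := by
        refine ⟨(q+1)/3, (2-q)/3, by positivity, by positivity, by ring, ?_⟩
        match_scalars <;> field_simp <;> ring
      obtain ⟨hσeq, -⟩ := (mem_extremePoints.mp ⟨hωAS, hωAext⟩).2 _ hσ _ hτ hseg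
      rw [smul_smul] at hσeq
      have hc : ((q+1)/2)⁻¹ * (2:ℝ)⁻¹ = (q+1)⁻¹ := by
        field_simp
      rw [hc] at hσeq
      have h2 : v + ωA = (q+1) • ωA := by
        have h := congrArg (fun z : VA => (q+1) • z) hσeq
        simpa [smul_smul, mul_inv_cancel₀ hq1'.ne'] using h
      have : v = (q+1) • ωA - ωA := eq_sub_of_add_eq h2
      rw [this, add_smul, one_smul, add_sub_cancel_right]
    -- step 2: extend to all functionals by linearity
    have hvall : ∀ f : VB →ₗ[ℝ] ℝ,
        TensorProduct.rid ℝ VA (TensorProduct.map (LinearMap.id : VA →ₗ[ℝ] VA) f x)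
          = f ωB • ωA := by
      set K : Submodule ℝ (VB →ₗ[ℝ] ℝ) :=
        { carrier := {f | TensorProduct.rid ℝ VA
            (TensorProduct.map (LinearMap.id : VA →ₗ[ℝ] VA) f x) = f ωB • ωA}
          add_mem' := by
            intro g h hg hh
            simp only [Set.mem_setOf_eq] at *
            rw [TensorProduct.map_add_right]
            simp only [LinearMap.add_apply, map_add]
            rw [hg, hh, add_smul]
          zero_mem' := by
            simp only [Set.mem_setOf_eq]
            have : TensorProduct.map (LinearMap.id : VA →ₗ[ℝ] VA) (0 : VB →ₗ[ℝ] ℝ) x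
                = (0 : VA ⊗[ℝ] ℝ) := by
              rw [show (0 : VB →ₗ[ℝ] ℝ) = (0:ℝ) • (0 : VB →ₗ[ℝ] ℝ) by simp,
                TensorProduct.map_smul_right]
              simp
            rw [this]
            simp
          smul_mem' := by
            intro c g hg
            simp only [Set.mem_setOf_eq] at *
            rw [TensorProduct.map_smul_right]
            simp only [LinearMap.smul_apply, map_smul]
            rw [hg, smul_eq_mul, mul_smul] } with hK
      have hspan : Submodule.span ℝ {f : VB →ₗ[ℝ] ℝ | ∀ y ∈ SB, 0 ≤ f y ∧ f y ≤ 1} ≤ K :=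
        Submodule.span_le.mpr hv
      intro f
      have hf : f ∈ K := by
        apply hspan
        rw [aux_span SB hSBc uB huB]
        trivial
      exact hf
    -- step 3: conclude via a basis expansion
    let b := Module.Basis.ofVectorSpace ℝ VB
    calc x = ∑ i, (TensorProduct.rid ℝ VA
          (TensorProduct.map (LinearMap.id : VA →ₗ[ℝ] VA) (b.coord i) x)) ⊗ₜ[ℝ] b i :=
        aux_expand b x
      _ = ∑ i, (TensorProduct.rid ℝ VA
          (TensorProduct.map (LinearMap.id : VA →ₗ[ℝ] VA) (b.coord i) (ωA ⊗ₜ[ℝ] ωB))) ⊗ₜ[ℝ] b i := by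
        refine Finset.sum_congr rfl fun i _ => ?_
        rw [hvall (b.coord i)]
        simp [rid_tmul]
      _ = ωA ⊗ₜ[ℝ] ωB := (aux_expand b _).symm
  -- main argument
  refine ⟨hprod, ?_⟩
  intro x₁ hx₁ x₂ hx₂ hseg
  obtain ⟨a, c, ha, hc, hac, hsum⟩ := hseg
  -- A-marginals
  have hmargA : TensorProduct.rid ℝ VA
      (TensorProduct.map (LinearMap.id : VA →ₗ[ℝ] VA) uB x₁) = ωA ∧
      TensorProduct.rid ℝ VA
      (TensorProduct.map (LinearMap.id : VA →ₗ[ℝ] VA) uB x₂) = ωA := by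
    apply (mem_extremePoints.mp ⟨hωAS, hωAext⟩).2 _ (hmAmem x₁ hx₁) _ (hmAmem x₂ hx₂)
    refine ⟨a, c, ha, hc, hac, ?_⟩
    have h := congrArg (fun z => TensorProduct.rid ℝ VA
      (TensorProduct.map (LinearMap.id : VA →ₗ[ℝ] VA) uB z)) hsum
    simp only [map_add, map_smul, map_tmul, rid_tmul, LinearMap.id_coe, id_eq] at h
    rw [h, huBωB, one_smul]
  have hmargB : TensorProduct.lid ℝ VB
      (TensorProduct.map uA (LinearMap.id : VB →ₗ[ℝ] VB) x₁) = ωB ∧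
      TensorProduct.lid ℝ VB
      (TensorProduct.map uA (LinearMap.id : VB →ₗ[ℝ] VB) x₂) = ωB := by
    apply (mem_extremePoints.mp ⟨hωBS, hωBext⟩).2 _ (hmBmem x₁ hx₁) _ (hmBmem x₂ hx₂)
    refine ⟨a, c, ha, hc, hac, ?_⟩
    have h := congrArg (fun z => TensorProduct.lid ℝ VB
      (TensorProduct.map uA (LinearMap.id : VB →ₗ[ℝ] VB) z)) hsum
    simp only [map_add, map_smul, map_tmul, lid_tmul, LinearMap.id_coe, id_eq] at h
    rw [h, huAωA, one_smul]
  exact key x₁ hx₁ hmargA.1 hmargB.1
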